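/- For all $x \in (0,1)$, the function $g(x) = 3\mathrm{E}(x) - (2-x)\mathrm{K}(x) - (1-x)\frac{\mathrm{K}^2(x)}{\mathrm{E}(x)}$ is negative, where $\mathrm{K}, \mathrm{E}$ are complete elliptic integrals of the first and second kind. -/

import Mathlib

open Real

/-- The complete elliptic integral of the first kind with parameter `x`. -/
noncomputable def ellipticK (x : ℝ) : ℝ :=
  ∫ φ in (0:ℝ)..(π/2), 1 / Real.sqrt (1 - x * Real.sin φ ^ 2)

/-- The complete elliptic integral of the second kind with parameter `x`. -/
noncomputable def ellipticE (x : ℝ) : ℝ :=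
  ∫ φ in (0:ℝ)..(π/2), Real.sqrt (1 - x * Real.sin φ ^ 2)

open MeasureTheory intervalIntegral Set Filter
open scoped Topology

section basic
variable {x : ℝ}

lemma u_pos (hx : x < 1) (hx0 : 0 ≤ x) (t : ℝ) : 0 < 1 - x * sin t ^ 2 := by
  nlinarith [sin_sq_le_one t, sq_nonneg (sin t)]

lemma u_le_one (hx0 : 0 ≤ x) (t : ℝ) : 1 - x * sin t ^ 2 ≤ 1 := by
  nlinarith [sq_nonneg (sin t)]

lemma u_ge (hx0 : 0 ≤ x) (t : ℝ) : 1 - x ≤ 1 - x * sin t ^ 2 := by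
  nlinarith [sin_sq_le_one t]

lemma st_pos (hx : x < 1) (hx0 : 0 ≤ x) (t : ℝ) : 0 < Real.sqrt (1 - x * sin t ^ 2) :=
  Real.sqrt_pos.2 (u_pos hx hx0 t)

lemma cont_st (hx : x < 1) (hx0 : 0 ≤ x) :
    Continuous fun t : ℝ => Real.sqrt (1 - x * sin t ^ 2) := by
  fun_prop

lemma cont_inv_st (hx : x < 1) (hx0 : 0 ≤ x) :
    Continuous fun t : ℝ => 1 / Real.sqrt (1 - x * sin t ^ 2) := by
  apply Continuous.div continuous_const (cont_st hx hx0)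
  exact fun t => (st_pos hx hx0 t).ne'

lemma intable_st (hx : x < 1) (hx0 : 0 ≤ x) :
    IntervalIntegrable (fun t : ℝ => Real.sqrt (1 - x * sin t ^ 2)) volume 0 (π/2) :=
  (cont_st hx hx0).intervalIntegrable _ _

lemma intable_inv_st (hx : x < 1) (hx0 : 0 ≤ x) :
    IntervalIntegrable (fun t : ℝ => 1 / Real.sqrt (1 - x * sin t ^ 2)) volume 0 (π/2) :=
  (cont_inv_st hx hx0).intervalIntegrable _ _

lemma E_le (hx : x < 1) (hx0 : 0 ≤ x) : ellipticE x ≤ π/2 := by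
  have h : ellipticE x ≤ ∫ t in (0:ℝ)..(π/2), (1:ℝ) := by
    apply intervalIntegral.integral_mono_on (by positivity) (intable_st hx hx0)
      (intervalIntegrable_const)
    intro t _
    calc Real.sqrt (1 - x * sin t ^ 2) ≤ Real.sqrt 1 := Real.sqrt_le_sqrt (u_le_one hx0 t)
    _ = 1 := by simp
  simpa using h

lemma E_ge (hx : x < 1) (hx0 : 0 ≤ x) : Real.sqrt (1-x) * (π/2) ≤ ellipticE x := by
  have h : ∫ t in (0:ℝ)..(π/2), Real.sqrt (1-x) ≤ ellipticE x := by
    apply intervalIntegral.integral_mono_on (by positivity) intervalIntegrable_const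
      (intable_st hx hx0)
    intro t _
    exact Real.sqrt_le_sqrt (u_ge hx0 t)
  simp only [intervalIntegral.integral_const, smul_eq_mul] at h
  linarith

lemma K_ge (hx : x < 1) (hx0 : 0 ≤ x) : π/2 ≤ ellipticK x := by
  have h : ∫ t in (0:ℝ)..(π/2), (1:ℝ) ≤ ellipticK x := by
    apply intervalIntegral.integral_mono_on (by positivity) intervalIntegrable_const
      (intable_inv_st hx hx0)
    intro t _
    rw [le_div_iff₀ (st_pos hx hx0 t), one_mul]
    calc Real.sqrt (1 - x * sin t ^ 2) ≤ Real.sqrt 1 := Real.sqrt_le_sqrt (u_le_one hx0 t)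
    _ = 1 := by simp
  simpa using h

lemma K_le (hx : x < 1) (hx0 : 0 ≤ x) : ellipticK x ≤ (1/Real.sqrt (1-x)) * (π/2) := by
  have h : ellipticK x ≤ ∫ t in (0:ℝ)..(π/2), (1/Real.sqrt (1-x)) := by
    apply intervalIntegral.integral_mono_on (by positivity) (intable_inv_st hx hx0)
      intervalIntegrable_const
    intro t _
    apply div_le_div_of_nonneg_left one_pos.le (Real.sqrt_pos.2 (by linarith)) ?_
    exact Real.sqrt_le_sqrt (u_ge hx0 t)
  simp only [intervalIntegral.integral_const, smul_eq_mul] at h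
  linarith

lemma E_pos (hx : x < 1) (hx0 : 0 ≤ x) : 0 < ellipticE x := by
  have := E_ge hx hx0
  have h1 : 0 < Real.sqrt (1-x) := Real.sqrt_pos.2 (by linarith)
  nlinarith [pi_pos]

lemma K_pos (hx : x < 1) (hx0 : 0 ≤ x) : 0 < ellipticK x := by
  have := K_ge hx hx0
  nlinarith [pi_pos]

end basic

section deriv
variable {x : ℝ}

lemma cont_inv_st3 (hx : x < 1) (hx0 : 0 ≤ x) :
    Continuous fun t : ℝ => 1 / (Real.sqrt (1 - x * sin t ^ 2) * (1 - x * sin t ^ 2)) := by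
  apply Continuous.div continuous_const ((cont_st hx hx0).mul (by fun_prop))
  intro t
  exact (mul_pos (st_pos hx hx0 t) (u_pos hx hx0 t)).ne'

lemma hasDerivAt_A (hx : x ∈ Ioo (0:ℝ) 1) (t : ℝ) :
    HasDerivAt (fun t : ℝ => x * (sin t * cos t / Real.sqrt (1 - x * sin t ^ 2)))
      (Real.sqrt (1 - x * sin t ^ 2)
        - (1 - x) / (Real.sqrt (1 - x * sin t ^ 2) * (1 - x * sin t ^ 2))) t := by
  obtain ⟨hx0, hx1⟩ := hx
  have hu := u_pos hx1 hx0.le t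
  have hst := st_pos hx1 hx0.le t
  have h1 : HasDerivAt (fun t : ℝ => sin t ^ 2) (2 * sin t * cos t) t := by
    simpa [mul_comm, mul_assoc] using ((hasDerivAt_sin t).fun_pow 2)
  have h2 : HasDerivAt (fun t : ℝ => 1 - x * sin t ^ 2) (-(x * (2 * sin t * cos t))) t := by
    simpa using ((h1.const_mul x).const_sub 1)
  have h3 : HasDerivAt (fun t : ℝ => Real.sqrt (1 - x * sin t ^ 2))
      (-(x * (2 * sin t * cos t)) / (2 * Real.sqrt (1 - x * sin t ^ 2))) t :=
    h2.sqrt hu.ne'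
  have h4 : HasDerivAt (fun t : ℝ => sin t * cos t)
      (cos t * cos t + sin t * (-sin t)) t := (hasDerivAt_sin t).mul (hasDerivAt_cos t)
  have h5 := (h4.div h3 hst.ne').const_mul x
  refine h5.congr_deriv ?_
  have hs2 : Real.sqrt (1 - x * sin t ^ 2) ^ 2 = 1 - x * sin t ^ 2 := Real.sq_sqrt hu.le
  have hpy : cos t ^ 2 = 1 - sin t ^ 2 := by
    have := sin_sq_add_cos_sq t; linarith
  set s := Real.sqrt (1 - x * sin t ^ 2) with hs
  set σ := sin t ^ 2 with hσ
  have key : s * ((1 - x*σ)^2 - (1-x)) = s * (x * ((cos t^2 - σ)*(1 - x*σ) + x*σ*cos t^2)) := by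
    rw [hpy]; ring
  field_simp
  linear_combination (x*(cos t^2-σ)*(1-x*σ) - (1-x*σ)*(s^2+(1-x*σ)) + (1-x)) * hs2 + (x*(1-x*σ)^2 + x^2*σ*(1-x*σ)) * hpy

lemma I3 (hx : x ∈ Ioo (0:ℝ) 1) :
    ∫ t in (0:ℝ)..(π/2), 1 / (Real.sqrt (1 - x * sin t ^ 2) * (1 - x * sin t ^ 2))
      = ellipticE x / (1 - x) := by
  obtain ⟨hx0, hx1⟩ := hx
  have hcont := cont_inv_st3 hx1 hx0.le
  have hint3 : IntervalIntegrable
      (fun t : ℝ => 1 / (Real.sqrt (1 - x * sin t ^ 2) * (1 - x * sin t ^ 2)))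
      volume 0 (π/2) := hcont.intervalIntegrable _ _
  have hbig : IntervalIntegrable (fun t : ℝ => Real.sqrt (1 - x * sin t ^ 2)
        - (1 - x) / (Real.sqrt (1 - x * sin t ^ 2) * (1 - x * sin t ^ 2))) volume 0 (π/2) := by
    apply (intable_st hx1 hx0.le).sub
    have : (fun t : ℝ => (1 - x) / (Real.sqrt (1 - x * sin t ^ 2) * (1 - x * sin t ^ 2)))
        = fun t : ℝ => (1 - x) * (1 / (Real.sqrt (1 - x * sin t ^ 2) * (1 - x * sin t ^ 2))) := by
      funext t; ring
    rw [this]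
    exact hint3.const_mul _
  have key : ∫ t in (0:ℝ)..(π/2),
      (Real.sqrt (1 - x * sin t ^ 2)
        - (1 - x) / (Real.sqrt (1 - x * sin t ^ 2) * (1 - x * sin t ^ 2)))
      = x * (sin (π/2) * cos (π/2) / Real.sqrt (1 - x * sin (π/2) ^ 2))
        - x * (sin 0 * cos 0 / Real.sqrt (1 - x * sin 0 ^ 2)) := by
    exact intervalIntegral.integral_eq_sub_of_hasDerivAt
      (fun t _ => hasDerivAt_A ⟨hx0, hx1⟩ t) hbig
  rw [Real.cos_pi_div_two, Real.sin_zero] at key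
  simp only [mul_zero, zero_mul, mul_div_assoc, zero_div, sub_zero] at key
  have split : ∫ t in (0:ℝ)..(π/2),
      (Real.sqrt (1 - x * sin t ^ 2)
        - (1 - x) / (Real.sqrt (1 - x * sin t ^ 2) * (1 - x * sin t ^ 2)))
      = ellipticE x - (1 - x) * ∫ t in (0:ℝ)..(π/2),
          1 / (Real.sqrt (1 - x * sin t ^ 2) * (1 - x * sin t ^ 2)) := by
    rw [intervalIntegral.integral_sub (intable_st hx1 hx0.le)]
    · rw [show (fun t : ℝ => (1 - x) / (Real.sqrt (1 - x * sin t ^ 2) * (1 - x * sin t ^ 2)))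
        = fun t : ℝ => (1 - x) * (1 / (Real.sqrt (1 - x * sin t ^ 2) * (1 - x * sin t ^ 2)))
        from funext fun t => by ring]
      rw [intervalIntegral.integral_const_mul]
      rfl
    · rw [show (fun t : ℝ => (1 - x) / (Real.sqrt (1 - x * sin t ^ 2) * (1 - x * sin t ^ 2)))
        = fun t : ℝ => (1 - x) * (1 / (Real.sqrt (1 - x * sin t ^ 2) * (1 - x * sin t ^ 2)))
        from funext fun t => by ring]
      exact hint3.const_mul _
  rw [split] at key
  have h1x : (1:ℝ) - x > 0 := by linarith
  rw [eq_div_iff h1x.ne']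
  linarith [key]

end deriv

section parametric
variable {x : ℝ}

lemma ball_facts (hx0 : 0 < x) (hx1 : x < 1) :
    ∀ z ∈ Metric.ball x (min (x/2) ((1-x)/2)), 0 < z ∧ z < 1 ∧ (1-x)/2 ≤ 1 - z := by
  intro z hz
  rw [Metric.mem_ball, Real.dist_eq, abs_lt] at hz
  obtain ⟨h1, h2⟩ := hz
  have e1 : min (x/2) ((1-x)/2) ≤ x/2 := min_le_left _ _
  have e2 : min (x/2) ((1-x)/2) ≤ (1-x)/2 := min_le_right _ _
  refine ⟨by linarith, by linarith, by linarith⟩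

lemma hasDerivAt_ellipticE (hx : x ∈ Ioo (0:ℝ) 1) :
    HasDerivAt ellipticE ((ellipticE x - ellipticK x) / (2*x)) x := by
  obtain ⟨hx0, hx1⟩ := hx
  set ε := min (x/2) ((1-x)/2) with hε
  have hε_pos : 0 < ε := lt_min (by linarith) (by linarith)
  have hδ : 0 < (1-x)/2 := by linarith
  have main := intervalIntegral.hasDerivAt_integral_of_dominated_loc_of_deriv_le
    (F := fun y t => Real.sqrt (1 - y * sin t ^ 2))
    (F' := fun y t => -(sin t ^ 2) / (2 * Real.sqrt (1 - y * sin t ^ 2)))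
    (bound := fun _ => 1 / (2 * Real.sqrt ((1-x)/2)))
    (μ := volume) (a := (0:ℝ)) (b := π/2) (x₀ := x) (Metric.ball_mem_nhds x hε_pos)
    ?meas ?int ?meas' ?bnd ?bint ?diff
  case meas =>
    refine Filter.Eventually.of_forall fun y => ?_
    exact (Continuous.aestronglyMeasurable (by fun_prop)).restrict
  case int => exact intable_st hx1 hx0.le
  case meas' =>
    apply Continuous.aestronglyMeasurable ?_ |>.restrict
    apply Continuous.div (by fun_prop) (by fun_prop)
    intro t
    have := st_pos hx1 hx0.le t
    positivity
  case bnd =>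
    refine Filter.Eventually.of_forall fun t _ z hz => ?_
    obtain ⟨hz0, hz1, hzd⟩ := ball_facts hx0 hx1 z hz
    have hu : (1-x)/2 ≤ 1 - z * sin t ^ 2 := le_trans hzd (u_ge hz0.le t)
    have hsq : Real.sqrt ((1-x)/2) ≤ Real.sqrt (1 - z * sin t ^ 2) := Real.sqrt_le_sqrt hu
    have hsqp : 0 < Real.sqrt ((1-x)/2) := Real.sqrt_pos.2 hδ
    rw [Real.norm_eq_abs, abs_div, abs_neg, abs_of_nonneg (sq_nonneg (sin t)),
      abs_of_nonneg (by positivity : (0:ℝ) ≤ 2 * Real.sqrt (1 - z * sin t ^ 2))]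
    apply div_le_div₀ (by positivity) (sin_sq_le_one t) (by positivity)
    linarith
  case bint => exact intervalIntegrable_const
  case diff =>
    refine Filter.Eventually.of_forall fun t _ z hz => ?_
    obtain ⟨hz0, hz1, hzd⟩ := ball_facts hx0 hx1 z hz
    have hu : 0 < 1 - z * sin t ^ 2 := u_pos hz1 hz0.le t
    have hinner : HasDerivAt (fun y : ℝ => 1 - y * sin t ^ 2) (-(sin t ^ 2)) z := by
      simpa using ((hasDerivAt_id z).mul_const (sin t ^ 2)).const_sub 1
    exact hinner.sqrt hu.ne'
  have hval : (∫ t in (0:ℝ)..(π/2), -(sin t ^ 2) / (2 * Real.sqrt (1 - x * sin t ^ 2)))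
      = (ellipticE x - ellipticK x) / (2*x) := by
    have hcongr : ∀ t : ℝ, -(sin t ^ 2) / (2 * Real.sqrt (1 - x * sin t ^ 2))
        = (1/(2*x)) * (Real.sqrt (1 - x * sin t ^ 2) - 1 / Real.sqrt (1 - x * sin t ^ 2)) := by
      intro t
      have hu := u_pos hx1 hx0.le t
      have hs2 : Real.sqrt (1 - x * sin t ^ 2) ^ 2 = 1 - x * sin t ^ 2 := Real.sq_sqrt hu.le
      have hst := st_pos hx1 hx0.le t
      field_simp
      rw [show (1 - sin t ^ 2 * x) = 1 - x * sin t ^ 2 by ring, hs2]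
      ring
    rw [intervalIntegral.integral_congr (g := fun t => (1/(2*x)) *
        (Real.sqrt (1 - x * sin t ^ 2) - 1 / Real.sqrt (1 - x * sin t ^ 2)))
        (fun t _ => hcongr t)]
    rw [intervalIntegral.integral_const_mul,
      intervalIntegral.integral_sub (intable_st hx1 hx0.le) (intable_inv_st hx1 hx0.le)]
    rw [show (∫ t in (0:ℝ)..(π/2), Real.sqrt (1 - x * sin t ^ 2)) = ellipticE x from rfl,
      show (∫ t in (0:ℝ)..(π/2), 1 / Real.sqrt (1 - x * sin t ^ 2)) = ellipticK x from rfl]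
    ring
  rw [hval] at main
  exact main.2

lemma hasDerivAt_ellipticK (hx : x ∈ Ioo (0:ℝ) 1) :
    HasDerivAt ellipticK ((ellipticE x / (1-x) - ellipticK x) / (2*x)) x := by
  obtain ⟨hx0, hx1⟩ := hx
  set ε := min (x/2) ((1-x)/2) with hε
  have hε_pos : 0 < ε := lt_min (by linarith) (by linarith)
  have hδ : 0 < (1-x)/2 := by linarith
  have main := intervalIntegral.hasDerivAt_integral_of_dominated_loc_of_deriv_le
    (F := fun y t => 1 / Real.sqrt (1 - y * sin t ^ 2))
    (F' := fun y t => sin t ^ 2 / (2 * (Real.sqrt (1 - y * sin t ^ 2) * (1 - y * sin t ^ 2))))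
    (bound := fun _ => 1 / (2 * (Real.sqrt ((1-x)/2) * ((1-x)/2))))
    (μ := volume) (a := (0:ℝ)) (b := π/2) (x₀ := x) (Metric.ball_mem_nhds x hε_pos)
    ?meas ?int ?meas' ?bnd ?bint ?diff
  case meas =>
    filter_upwards [Metric.ball_mem_nhds x hε_pos] with z hz
    obtain ⟨hz0, hz1, -⟩ := ball_facts hx0 hx1 z hz
    exact ((cont_inv_st hz1 hz0.le).aestronglyMeasurable).restrict
  case int => exact intable_inv_st hx1 hx0.le
  case meas' =>
    refine (Continuous.aestronglyMeasurable ?_).restrict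
    apply Continuous.div (by fun_prop) (by fun_prop)
    intro t
    have h1 := st_pos hx1 hx0.le t
    have h2 := u_pos hx1 hx0.le t
    positivity
  case bnd =>
    refine Filter.Eventually.of_forall fun t _ z hz => ?_
    obtain ⟨hz0, hz1, hzd⟩ := ball_facts hx0 hx1 z hz
    have hu : (1-x)/2 ≤ 1 - z * sin t ^ 2 := le_trans hzd (u_ge hz0.le t)
    have hup : 0 < 1 - z * sin t ^ 2 := lt_of_lt_of_le hδ hu
    have hsq : Real.sqrt ((1-x)/2) ≤ Real.sqrt (1 - z * sin t ^ 2) := Real.sqrt_le_sqrt hu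
    have hsqp : 0 < Real.sqrt ((1-x)/2) := Real.sqrt_pos.2 hδ
    have hprod : Real.sqrt ((1-x)/2) * ((1-x)/2) ≤
        Real.sqrt (1 - z * sin t ^ 2) * (1 - z * sin t ^ 2) :=
      mul_le_mul hsq hu hδ.le (Real.sqrt_nonneg _)
    rw [Real.norm_eq_abs, abs_div, abs_of_nonneg (sq_nonneg (sin t)),
      abs_of_nonneg (by positivity : (0:ℝ) ≤ 2 * (Real.sqrt (1 - z * sin t ^ 2) * (1 - z * sin t ^ 2)))]
    apply div_le_div₀ (by positivity) (sin_sq_le_one t) (by positivity)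
    linarith
  case bint => exact intervalIntegrable_const
  case diff =>
    refine Filter.Eventually.of_forall fun t _ z hz => ?_
    obtain ⟨hz0, hz1, hzd⟩ := ball_facts hx0 hx1 z hz
    have hu : 0 < 1 - z * sin t ^ 2 := u_pos hz1 hz0.le t
    have hst := st_pos hz1 hz0.le t
    have hinner : HasDerivAt (fun y : ℝ => 1 - y * sin t ^ 2) (-(sin t ^ 2)) z := by
      simpa using ((hasDerivAt_id z).mul_const (sin t ^ 2)).const_sub 1
    have hs : HasDerivAt (fun y : ℝ => Real.sqrt (1 - y * sin t ^ 2))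
        (-(sin t ^ 2) / (2 * Real.sqrt (1 - z * sin t ^ 2))) z := hinner.sqrt hu.ne'
    have hq := hs.fun_inv hst.ne'
    have hs2 : Real.sqrt (1 - z * sin t ^ 2) ^ 2 = 1 - z * sin t ^ 2 := Real.sq_sqrt hu.le
    have heq : -(-(sin t ^ 2) / (2 * Real.sqrt (1 - z * sin t ^ 2))) /
        (Real.sqrt (1 - z * sin t ^ 2)) ^ 2
        = sin t ^ 2 / (2 * (Real.sqrt (1 - z * sin t ^ 2) * (1 - z * sin t ^ 2))) := by
      rw [hs2]
      simp only [neg_div, neg_neg]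
      rw [div_div]
      ring
    rw [heq] at hq
    simpa only [one_div] using hq
  have hval : (∫ t in (0:ℝ)..(π/2),
        sin t ^ 2 / (2 * (Real.sqrt (1 - x * sin t ^ 2) * (1 - x * sin t ^ 2))))
      = (ellipticE x / (1-x) - ellipticK x) / (2*x) := by
    have hcongr : ∀ t : ℝ, sin t ^ 2 / (2 * (Real.sqrt (1 - x * sin t ^ 2) * (1 - x * sin t ^ 2)))
        = (1/(2*x)) * (1 / (Real.sqrt (1 - x * sin t ^ 2) * (1 - x * sin t ^ 2))
            - 1 / Real.sqrt (1 - x * sin t ^ 2)) := by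
      intro t
      have hu := u_pos hx1 hx0.le t
      have hs2 : Real.sqrt (1 - x * sin t ^ 2) ^ 2 = 1 - x * sin t ^ 2 := Real.sq_sqrt hu.le
      have hst := st_pos hx1 hx0.le t
      have hu' : 1 - sin t ^ 2 * x ≠ 0 := by rw [mul_comm]; exact hu.ne'
      have hst' : √(1 - sin t ^ 2 * x) ≠ 0 := by rw [mul_comm]; exact hst.ne'
      field_simp
      ring
    rw [intervalIntegral.integral_congr (g := fun t => (1/(2*x)) *
        (1 / (Real.sqrt (1 - x * sin t ^ 2) * (1 - x * sin t ^ 2))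
          - 1 / Real.sqrt (1 - x * sin t ^ 2))) (fun t _ => hcongr t)]
    rw [intervalIntegral.integral_const_mul,
      intervalIntegral.integral_sub (by
        have := cont_inv_st3 hx1 hx0.le
        exact this.intervalIntegrable _ _) (intable_inv_st hx1 hx0.le)]
    rw [I3 ⟨hx0, hx1⟩,
      show (∫ t in (0:ℝ)..(π/2), 1 / Real.sqrt (1 - x * sin t ^ 2)) = ellipticK x from rfl]
    ring
  rw [hval] at main
  exact main.2

end parametric

section barrier

lemma barrier_neg {f f' : ℝ → ℝ}
    (hd : ∀ x ∈ Ioo (0:ℝ) 1, HasDerivAt f (f' x) x)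
    (hneg : ∀ x ∈ Ioo (0:ℝ) 1, 0 ≤ f x → f' x < 0)
    (hlim : Tendsto f (𝓝[>] (0:ℝ)) (𝓝 0)) :
    ∀ x ∈ Ioo (0:ℝ) 1, f x < 0 := by
  intro x₀ hx₀
  by_contra hcon
  push_neg at hcon
  obtain ⟨x₁, hx₁, hfx₁⟩ : ∃ x₁, x₁ ∈ Ioo (0:ℝ) 1 ∧ 0 < f x₁ := by
    rcases lt_or_eq_of_le hcon with h | h
    · exact ⟨x₀, hx₀, h⟩
    · have hd0 := hd x₀ hx₀
      have hneg0 : f' x₀ < 0 := hneg x₀ hx₀ hcon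
      have hslope : Tendsto (slope f x₀) (𝓝[≠] x₀) (𝓝 (f' x₀)) :=
        hasDerivAt_iff_tendsto_slope.mp hd0
      have hev1 : ∀ᶠ t in 𝓝[≠] x₀, slope f x₀ t < 0 :=
        hslope.eventually (gt_mem_nhds hneg0)
      have hle : 𝓝[<] x₀ ≤ 𝓝[≠] x₀ :=
        nhdsWithin_mono _ fun t ht => ne_of_lt ht
      have hev2 : ∀ᶠ t in 𝓝[<] x₀, slope f x₀ t < 0 := hev1.filter_mono hle
      have hev3 : Ioo (0:ℝ) x₀ ∈ 𝓝[<] x₀ :=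
        Ioo_mem_nhdsLT_of_mem ⟨hx₀.1, le_refl x₀⟩
      obtain ⟨t, hts, htm⟩ := (hev2.and hev3).exists
      refine ⟨t, ⟨htm.1, lt_trans htm.2 hx₀.2⟩, ?_⟩
      have hslope_eq : slope f x₀ t = (f t - f x₀) / (t - x₀) := slope_def_field f x₀ t
      rw [hslope_eq] at hts
      rcases div_neg_iff.mp hts with ⟨h1, h2⟩ | ⟨h1, h2⟩
      · linarith [htm.2]
      · linarith [h]
  have key : ∀ a ∈ Ioo (0:ℝ) x₁, f x₁ < f a := by
    intro a ha
    have hpos : ∀ t ∈ Ioc a x₁, 0 < f t := by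
      by_contra hzc
      push_neg at hzc
      obtain ⟨w, hw, hfw⟩ := hzc
      set Z := {t | t ∈ Ioc a x₁ ∧ f t ≤ 0} with hZdef
      have hZne : Z.Nonempty := ⟨w, hw, hfw⟩
      have hZbdd : BddAbove Z := ⟨x₁, fun t ht => ht.1.2⟩
      set z := sSup Z with hz_def
      have hz_le : z ≤ x₁ := csSup_le hZne fun t ht => ht.1.2
      have hz_gt : a < z := lt_of_lt_of_le hw.1 (le_csSup hZbdd ⟨hw, hfw⟩)
      have hzIoo : z ∈ Ioo (0:ℝ) 1 := ⟨lt_trans ha.1 hz_gt, lt_of_le_of_lt hz_le hx₁.2⟩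
      have hfz : f z ≤ 0 := by
        by_contra hfzpos
        push_neg at hfzpos
        have hcont : ContinuousAt f z := (hd z hzIoo).continuousAt
        have hev : ∀ᶠ t in 𝓝 z, 0 < f t := hcont.eventually (lt_mem_nhds hfzpos)
        obtain ⟨δ, hδ, hδball⟩ := Metric.eventually_nhds_iff.mp hev
        have hub : z ≤ z - δ/2 := by
          apply csSup_le hZne
          intro t ht
          by_contra hh
          push_neg at hh
          have htz : t ≤ z := le_csSup hZbdd ht
          have hdist : dist t z < δ := by
            rw [Real.dist_eq, abs_lt]; constructor <;> linarith
          linarith [hδball hdist, ht.2]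
        linarith
      have hz_lt : z < x₁ := by
        rcases lt_or_eq_of_le hz_le with h | h
        · exact h
        · rw [h] at hfz; linarith
      have hmidpos : ∀ t ∈ Ioo z x₁, 0 < f t := by
        intro t ht
        by_contra hft
        push_neg at hft
        have : t ≤ z := le_csSup hZbdd ⟨⟨lt_trans hz_gt ht.1, le_of_lt ht.2⟩, hft⟩
        linarith [ht.1]
      have hanti : StrictAntiOn f (Icc z x₁) := by
        apply strictAntiOn_of_deriv_neg (convex_Icc _ _)
        · intro t ht
          exact ((hd t ⟨lt_of_lt_of_le hzIoo.1 ht.1,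
            lt_of_le_of_lt ht.2 hx₁.2⟩).continuousAt).continuousWithinAt
        · intro t ht
          rw [interior_Icc] at ht
          have htIoo : t ∈ Ioo (0:ℝ) 1 := ⟨lt_trans hzIoo.1 ht.1, lt_trans ht.2 hx₁.2⟩
          rw [(hd t htIoo).deriv]
          exact hneg t htIoo (le_of_lt (hmidpos t ht))
      have := hanti (left_mem_Icc.mpr (le_of_lt hz_lt))
        (right_mem_Icc.mpr (le_of_lt hz_lt)) hz_lt
      linarith
    have hanti : StrictAntiOn f (Icc a x₁) := by
      apply strictAntiOn_of_deriv_neg (convex_Icc _ _)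
      · intro t ht
        exact ((hd t ⟨lt_of_lt_of_le ha.1 ht.1,
          lt_of_le_of_lt ht.2 hx₁.2⟩).continuousAt).continuousWithinAt
      · intro t ht
        rw [interior_Icc] at ht
        have htIoo : t ∈ Ioo (0:ℝ) 1 := ⟨lt_trans ha.1 ht.1, lt_trans ht.2 hx₁.2⟩
        rw [(hd t htIoo).deriv]
        exact hneg t htIoo (le_of_lt (hpos t ⟨ht.1, le_of_lt ht.2⟩))
    exact hanti (left_mem_Icc.mpr (le_of_lt ha.2))
      (right_mem_Icc.mpr (le_of_lt ha.2)) ha.2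
  have hev : ∀ᶠ a in 𝓝[>] (0:ℝ), f x₁ ≤ f a := by
    filter_upwards [Ioo_mem_nhdsGT_of_mem (⟨le_refl (0:ℝ), hx₁.1⟩ : (0:ℝ) ∈ Ico (0:ℝ) x₁)]
      with a ha using le_of_lt (key a ha)
  have : f x₁ ≤ 0 := ge_of_tendsto hlim hev
  linarith

end barrier

section psi

noncomputable def Psi (x : ℝ) : ℝ :=
  ellipticE x - (1 + Real.sqrt (1-x))^2/4 * ellipticK x

noncomputable def Psi' (x : ℝ) : ℝ :=
  (ellipticE x - ellipticK x) / (2*x)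
    + (1 + Real.sqrt (1-x)) / (4 * Real.sqrt (1-x)) * ellipticK x
    - (1 + Real.sqrt (1-x))^2/4 * ((ellipticE x / (1-x) - ellipticK x) / (2*x))

lemma hasDerivAt_Psi {x : ℝ} (hx : x ∈ Ioo (0:ℝ) 1) :
    HasDerivAt Psi (Psi' x) x := by
  obtain ⟨hx0, hx1⟩ := hx
  have h1x : (0:ℝ) < 1 - x := by linarith
  have hy : 0 < Real.sqrt (1-x) := Real.sqrt_pos.2 h1x
  have hd1 : HasDerivAt (fun x : ℝ => 1 - x) (-1) x := by
    simpa using (hasDerivAt_id x).const_sub 1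
  have hd2 : HasDerivAt (fun x : ℝ => Real.sqrt (1-x)) (-1 / (2 * Real.sqrt (1-x))) x :=
    hd1.sqrt h1x.ne'
  have hd3 : HasDerivAt (fun x : ℝ => 1 + Real.sqrt (1-x)) (-1 / (2 * Real.sqrt (1-x))) x :=
    hd2.const_add 1
  have hd4 : HasDerivAt (fun x : ℝ => (1 + Real.sqrt (1-x))^2)
      (2 * (1 + Real.sqrt (1-x))^1 * (-1 / (2 * Real.sqrt (1-x)))) x := by
    simpa using hd3.fun_pow 2
  have hd5 : HasDerivAt (fun x : ℝ => (1 + Real.sqrt (1-x))^2/4)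
      ((2 * (1 + Real.sqrt (1-x))^1 * (-1 / (2 * Real.sqrt (1-x))))/4) x := hd4.div_const 4
  have hdK := hasDerivAt_ellipticK ⟨hx0, hx1⟩
  have hdE := hasDerivAt_ellipticE ⟨hx0, hx1⟩
  have hmul := hd5.mul hdK
  have hfin := hdE.sub hmul
  refine hfin.congr_deriv ?_
  unfold Psi'
  field_simp
  ring

lemma Psi'_neg {x : ℝ} (hx : x ∈ Ioo (0:ℝ) 1) (hge : 0 ≤ Psi x) : Psi' x < 0 := by
  obtain ⟨hx0, hx1⟩ := hx
  have h1x : (0:ℝ) < 1 - x := by linarith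
  set y := Real.sqrt (1-x) with hy_def
  have hy0 : 0 < y := Real.sqrt_pos.2 h1x
  have hyx : y^2 = 1 - x := Real.sq_sqrt h1x.le
  have hy1 : y < 1 := by nlinarith
  have hx_eq : x = 1 - y^2 := by linarith
  set E := ellipticE x with hE_def
  set K := ellipticK x with hK_def
  have hK : 0 < K := K_pos hx1 hx0.le
  have hE : (1+y)^2/4 * K ≤ E := by
    have h0 : Psi x = E - (1+y)^2/4 * K := rfl
    rw [h0] at hge
    linarith
  have hkey : Psi' x * (8*x*y^2) =
      -(1-y)*(1+3*y)*E + (-4*y^2 + 2*y*(1-y)*(1+y)^2 + y^2*(1+y)^2)*K := by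
    have h0 : Psi' x = (E - K) / (2*x) + (1+y) / (4*y) * K
        - (1+y)^2/4 * ((E / (1-x) - K) / (2*x)) := rfl
    rw [h0, hx_eq]
    have hy2 : (1:ℝ) - (1 - y^2) = y^2 := by ring
    have hyne : y ≠ 0 := hy0.ne'
    have h2 : (1:ℝ) - y^2 ≠ 0 := by nlinarith
    field_simp
    ring
  have hfactor : 0 < 8*x*y^2 := by positivity
  have hrhs : -(1-y)*(1+3*y)*E + (-4*y^2 + 2*y*(1-y)*(1+y)^2 + y^2*(1+y)^2)*K
      ≤ -(1-y)^4/4 * K := by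
    have hcoef : 0 ≤ (1-y)*(1+3*y) := by nlinarith
    nlinarith [mul_le_mul_of_nonneg_left hE hcoef]
  have hK4 : 0 < (1-y)^4/4 * K := by
    have h1y : 0 < 1 - y := by linarith
    have h14 : 0 < (1-y)^4 := pow_pos h1y 4
    exact mul_pos (div_pos h14 (by norm_num)) hK
  by_contra hcontra
  push_neg at hcontra
  have h2 : 0 ≤ Psi' x * (8*x*y^2) := mul_nonneg hcontra hfactor.le
  rw [hkey] at h2
  linarith

lemma Psi_tendsto : Tendsto Psi (𝓝[>] (0:ℝ)) (𝓝 0) := by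
  have hmem : Ioo (0:ℝ) (1/2) ∈ 𝓝[>] (0:ℝ) :=
    Ioo_mem_nhdsGT_of_mem ⟨le_refl 0, by norm_num⟩
  have hs : Tendsto (fun x : ℝ => Real.sqrt (1-x)) (𝓝[>] (0:ℝ)) (𝓝 1) := by
    have hc : ContinuousAt (fun x : ℝ => Real.sqrt (1-x)) 0 :=
      (Real.continuous_sqrt.comp (continuous_const.sub continuous_id)).continuousAt
    have h0 : Real.sqrt (1 - (0:ℝ)) = 1 := by norm_num
    have hmono : (𝓝[>] (0:ℝ)) ≤ 𝓝 0 := nhdsWithin_le_nhds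
    have := hc.tendsto.mono_left hmono
    rwa [h0] at this
  have hgl : ContinuousAt (fun s : ℝ => s*(π/2) - (1+s)^2/4 * ((1/s)*(π/2))) 1 := by
    apply ContinuousAt.sub
    · exact continuousAt_id.mul continuousAt_const
    · exact (((continuousAt_const.add continuousAt_id).pow 2).div_const 4).mul
        ((continuousAt_const.div continuousAt_id one_ne_zero).mul continuousAt_const)
  have hgu : ContinuousAt (fun s : ℝ => π/2 - (1+s)^2/4 * (π/2)) 1 := by
    apply ContinuousAt.sub continuousAt_const
    exact (((continuousAt_const.add continuousAt_id).pow 2).div_const 4).mul continuousAt_const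
  have hlowt : Tendsto (fun x : ℝ =>
      Real.sqrt (1-x) * (π/2) - (1 + Real.sqrt (1-x))^2/4 * ((1/Real.sqrt (1-x))*(π/2)))
      (𝓝[>] (0:ℝ)) (𝓝 0) := by
    have := (hgl.tendsto.comp hs)
    rw [show (1:ℝ) * (π / 2) - (1 + 1) ^ 2 / 4 * (1 / 1 * (π / 2)) = 0 by norm_num] at this
    exact this
  have hupt : Tendsto (fun x : ℝ =>
      π/2 - (1 + Real.sqrt (1-x))^2/4 * (π/2)) (𝓝[>] (0:ℝ)) (𝓝 0) := by
    have := (hgu.tendsto.comp hs)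
    rw [show π / 2 - (1 + 1) ^ 2 / 4 * (π / 2) = (0:ℝ) by norm_num] at this
    exact this
  apply tendsto_of_tendsto_of_tendsto_of_le_of_le' hlowt hupt
  · filter_upwards [hmem] with x hx
    have hx1 : x < 1 := by linarith [hx.2]
    have hE := E_ge hx1 hx.1.le
    have hK := K_le hx1 hx.1.le
    have hb : 0 ≤ (1 + Real.sqrt (1-x))^2/4 := by positivity
    have := mul_le_mul_of_nonneg_left hK hb
    unfold Psi
    linarith
  · filter_upwards [hmem] with x hx
    have hx1 : x < 1 := by linarith [hx.2]
    have hE := E_le hx1 hx.1.le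
    have hK := K_ge hx1 hx.1.le
    have hb : 0 ≤ (1 + Real.sqrt (1-x))^2/4 := by positivity
    have := mul_le_mul_of_nonneg_left hK hb
    unfold Psi
    linarith

end psi

theorem elliptic_g_negative (x : ℝ) (hx : x ∈ Set.Ioo (0:ℝ) 1) :
    3 * ellipticE x - (2 - x) * ellipticK x
      - (1 - x) * (ellipticK x)^2 / ellipticE x < 0 := by
  obtain ⟨hx0, hx1⟩ := hx
  have hPsi : Psi x < 0 := barrier_neg (fun z hz => hasDerivAt_Psi hz)
    (fun z hz h => Psi'_neg hz h) Psi_tendsto x ⟨hx0, hx1⟩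
  have h1x : (0:ℝ) < 1 - x := by linarith
  set y := Real.sqrt (1-x) with hy_def
  have hy0 : 0 < y := Real.sqrt_pos.2 h1x
  have hyx : y^2 = 1 - x := Real.sq_sqrt h1x.le
  have hy1 : y < 1 := by nlinarith
  have hx_eq : x = 1 - y^2 := by linarith
  set E := ellipticE x with hE_def
  set K := ellipticK x with hK_def
  have hK0 : 0 < K := K_pos hx1 hx0.le
  have hE0 : 0 < E := E_pos hx1 hx0.le
  have hEb : E < (1+y)^2/4 * K := by
    have h0 : Psi x = E - (1+y)^2/4 * K := rfl
    rw [h0] at hPsi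
    linarith
  have hqm : 3*((1+y)^2/4*K)^2 - (2-x)*K*((1+y)^2/4*K) - (1-x)*K^2
      = -((1-y)^4/16)*K^2 := by
    rw [hx_eq]; ring
  have hq0 : -(1-x)*K^2 < 0 := by nlinarith [mul_pos h1x (mul_pos hK0 hK0)]
  have hq : 3*E^2 - (2-x)*K*E - (1-x)*K^2 < 0 := by
    have hqm_le : 3*((1+y)^2/4*K)^2 - (2-x)*K*((1+y)^2/4*K) - (1-x)*K^2 ≤ 0 := by
      rw [hqm]
      have : 0 ≤ (1-y)^4*K^2 := by positivity
      linarith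
    have hm0 : 0 < (1+y)^2/4*K := by positivity
    nlinarith [mul_pos hE0 (sub_pos.mpr hEb), hqm_le, hq0, hm0, hE0, hEb,
      mul_pos hm0 hE0, mul_pos hm0 (sub_pos.mpr hEb)]
  have hfin : 3*E - (2-x)*K < (1-x)*K^2/E := by
    rw [lt_div_iff₀ hE0]
    nlinarith [hq]
  linarith
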